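/- Let $H \in \mathbb{C}^{js\times js}$ be block upper Hessenberg with invertible subdiagonal blocks and let $\Lambda(z)$ be its block characteristic polynomial with respect to $E_1$ with leading coefficient $\Gamma_2^{-1}\cdots\Gamma_j^{-1}$. If $\theta$ is a simple eigenvalue of $H$ with right eigenvector $v$ and left eigenvector $w$, partitioned into $s$-blocks $v = (v_1,\ldots,v_j)$ and $w = (w_1,\ldots,w_j)$, then $w_1^* \Lambda(\theta) = 0$, $\Lambda(\theta) v_j = 0$, and $w^* v = w_1^* \Lambda'(\theta) v_j$. -/

import Mathlib

open Matrix Polynomial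

abbrev Mat (s : ℕ) := Matrix (Fin s) (Fin s) ℂ

/-- The `(p,q)` block (of size `s × s`) of a `js × js` block matrix. -/
def blk {j s : ℕ} (H : Matrix (Fin j × Fin s) (Fin j × Fin s) ℂ) (p q : Fin j) :
    Mat s := Matrix.of fun a b => H (p, a) (q, b)

/-- The `i`-th block canonical vector `E_i = e_i ⊗ I_s`. -/
def blkE {j s : ℕ} (i : Fin j) : Matrix (Fin j × Fin s) (Fin s) ℂ :=
  Matrix.of fun pa b => if pa.1 = i ∧ pa.2 = b then 1 else 0

/-- Block upper Hessenberg: all blocks strictly below the first subdiagonal vanish. -/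
def BUH {j s : ℕ} (H : Matrix (Fin j × Fin s) (Fin j × Fin s) ℂ) : Prop :=
  ∀ p q : Fin j, (q : ℕ) + 1 < (p : ℕ) → blk H p q = 0

/-- The action `P(N) ∘ W := ∑ᵢ Nⁱ W Pᵢ` of a matrix polynomial on a block vector. -/
noncomputable def act {n : Type*} [Fintype n] [DecidableEq n] {s : ℕ}
    (P : Polynomial (Mat s)) (N : Matrix n n ℂ) (W : Matrix n (Fin s) ℂ) :
    Matrix n (Fin s) ℂ :=
  ∑ i ∈ Finset.range (P.natDegree + 1), (N ^ i) * W * P.coeff i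

/-- Evaluation of a matrix polynomial at a scalar: `P(z) = ∑ᵢ zⁱ Pᵢ`. -/
noncomputable def evalS {s : ℕ} (P : Polynomial (Mat s)) (z : ℂ) : Mat s :=
  ∑ i ∈ Finset.range (P.natDegree + 1), z ^ i • P.coeff i

/-- The subdiagonal block `Γ_i = H_{(i-1)(i-2)}` (paper indexing, `2 ≤ i ≤ j`),
with the convention `Γ_i = I` out of range (in particular `Γ₁ = I`). -/
noncomputable def Gam {j s : ℕ} (H : Matrix (Fin j × Fin s) (Fin j × Fin s) ℂ)
    (i : ℕ) : Mat s :=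
  if h : 2 ≤ i ∧ i ≤ j then blk H ⟨i - 1, by omega⟩ ⟨i - 2, by omega⟩ else 1

section helpers
variable {j s : ℕ}

/-- row-block of a tall matrix -/
def bRow (Y : Matrix (Fin j × Fin s) (Fin s) ℂ) (p : Fin j) : Mat s :=
  Matrix.of fun a b => Y (p, a) b

lemma blk_mul (A B : Matrix (Fin j × Fin s) (Fin j × Fin s) ℂ) (p q : Fin j) :
    blk (A * B) p q = ∑ r : Fin j, blk A p r * blk B r q := by
  ext a b
  simp [blk, Matrix.mul_apply, Matrix.sum_apply, Fintype.sum_prod_type]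

lemma bRow_mul (A : Matrix (Fin j × Fin s) (Fin j × Fin s) ℂ)
    (Y : Matrix (Fin j × Fin s) (Fin s) ℂ) (p : Fin j) :
    bRow (A * Y) p = ∑ r : Fin j, blk A p r * bRow Y r := by
  ext a b
  simp [bRow, blk, Matrix.mul_apply, Matrix.sum_apply, Fintype.sum_prod_type]

lemma bRow_mulRight (Y : Matrix (Fin j × Fin s) (Fin s) ℂ) (C : Mat s) (p : Fin j) :
    bRow (Y * C) p = bRow Y p * C := by
  ext a b; simp [bRow, Matrix.mul_apply]

lemma bRow_E (i p : Fin j) : bRow (blkE i : Matrix (Fin j × Fin s) (Fin s) ℂ) p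
    = if p = i then 1 else 0 := by
  ext a b
  by_cases h : p = i <;> simp [bRow, blkE, h, Matrix.one_apply]

lemma blk_one (p q : Fin j) :
    blk (1 : Matrix (Fin j × Fin s) (Fin j × Fin s) ℂ) p q = if p = q then 1 else 0 := by
  ext a b
  by_cases h : p = q <;> by_cases h2 : a = b <;>
    simp [blk, Matrix.one_apply, Prod.ext_iff, h, h2]

lemma bRow_sum {ι : Type*} (t : Finset ι) (f : ι → Matrix (Fin j × Fin s) (Fin s) ℂ)
    (p : Fin j) : bRow (∑ i ∈ t, f i) p = ∑ i ∈ t, bRow (f i) p := by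
  ext a b
  simp only [bRow, Matrix.of_apply, Matrix.sum_apply]

lemma bRow_smul (c : ℂ) (Y : Matrix (Fin j × Fin s) (Fin s) ℂ) (p : Fin j) :
    bRow (c • Y) p = c • bRow Y p := by
  ext a b; simp [bRow]

lemma mulVec_bRow (Y : Matrix (Fin j × Fin s) (Fin s) ℂ) (u : Fin s → ℂ)
    (p : Fin j) (a : Fin s) : Y.mulVec u (p, a) = (bRow Y p).mulVec u a := by
  simp [Matrix.mulVec, dotProduct, bRow]

end helpers

section hess
variable {j s : ℕ} {H : Matrix (Fin j × Fin s) (Fin j × Fin s) ℂ}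

lemma blk_pow_eq_zero (hH : BUH H) :
    ∀ k : ℕ, ∀ p q : Fin j, (q : ℕ) + k < (p : ℕ) → blk (H ^ k) p q = 0 := by
  intro k
  induction k with
  | zero =>
    intro p q h
    rw [pow_zero, blk_one, if_neg]
    intro hpq; subst hpq; omega
  | succ k ih =>
    intro p q h
    rw [pow_succ, blk_mul]
    apply Finset.sum_eq_zero
    intro r _
    by_cases hr : (q : ℕ) + 1 < (r : ℕ)
    · rw [hH r q hr, mul_zero]
    · rw [ih p r (by omega), zero_mul]

lemma blk_pow_diag (hH : BUH H) (k : ℕ) (hk : k + 1 < j) :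
    blk (H ^ (k + 1)) ⟨k + 1, by omega⟩ ⟨0, by omega⟩
      = Gam H (k + 2) * blk (H ^ k) ⟨k, by omega⟩ ⟨0, by omega⟩ := by
  have hj0 : 0 < j := by omega
  rw [pow_succ', blk_mul]
  rw [Finset.sum_eq_single (⟨k, by omega⟩ : Fin j)]
  · congr 1
    rw [Gam, dif_pos ⟨by omega, by omega⟩]
    congr 1
  · intro r _ hr
    by_cases h1 : (r : ℕ) + 1 < k + 1
    · rw [hH ⟨k + 1, by omega⟩ r (by simpa using h1), zero_mul]
    · rw [blk_pow_eq_zero hH k r ⟨0, hj0⟩ ?_, mul_zero]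
      have : (r : ℕ) ≠ k := fun hc => hr (Fin.ext hc)
      simp only []
      omega
  · intro h; exact absurd (Finset.mem_univ _) h

lemma blk_pow_prod_inv (hH : BUH H)
    (hinv : ∀ i : ℕ, 2 ≤ i → i ≤ j → IsUnit (Gam H i)) :
    ∀ k : ℕ, (hk : k < j) →
      blk (H ^ k) ⟨k, hk⟩ ⟨0, by omega⟩ *
        ((List.range k).map (fun m => (Gam H (m + 2))⁻¹)).prod = 1 := by
  intro k
  induction k with
  | zero =>
    intro hk
    simp [pow_zero, blk_one]
  | succ k ih =>
    intro hk
    rw [blk_pow_diag hH k hk, List.range_succ, List.map_append, List.prod_append]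
    have hu : IsUnit (Gam H (k + 2)) := hinv (k + 2) (by omega) (by omega)
    have hu' : IsUnit (Gam H (k + 2)).det := (Matrix.isUnit_iff_isUnit_det _).mp hu
    calc Gam H (k + 2) * blk (H ^ k) ⟨k, by omega⟩ ⟨0, by omega⟩ *
          (((List.range k).map fun m => (Gam H (m + 2))⁻¹).prod *
            ([k].map fun m => (Gam H (m + 2))⁻¹).prod)
        = Gam H (k + 2) * (blk (H ^ k) ⟨k, by omega⟩ ⟨0, by omega⟩ *
            ((List.range k).map fun m => (Gam H (m + 2))⁻¹).prod) *
              (Gam H (k + 2))⁻¹ := by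
          simp [mul_assoc]
      _ = 1 := by rw [ih (by omega), mul_one, Matrix.mul_nonsing_inv _ hu']

end hess

section rec
variable {j s : ℕ} {H : Matrix (Fin j × Fin s) (Fin j × Fin s) ℂ}

lemma mulVec_eq_zero_of_isUnit {A : Mat s} (hA : IsUnit A) {x : Fin s → ℂ}
    (h : A.mulVec x = 0) : x = 0 := by
  have hd : IsUnit A.det := (Matrix.isUnit_iff_isUnit_det _).mp hA
  have := congrArg (A⁻¹.mulVec) h
  rwa [Matrix.mulVec_mulVec, Matrix.nonsing_inv_mul _ hd, Matrix.one_mulVec,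
    Matrix.mulVec_zero] at this

lemma backward_zero (hH : BUH H)
    (hinv : ∀ i : ℕ, 2 ≤ i → i ≤ j → IsUnit (Gam H i)) (θ : ℂ)
    (d : Fin j × Fin s → ℂ) (hj : 0 < j)
    (hrow : ∀ p : Fin j, 0 < (p : ℕ) → ∀ a : Fin s,
      ((θ • 1 - H).mulVec d) (p, a) = 0)
    (hlast : ∀ a : Fin s, d (⟨j - 1, by omega⟩, a) = 0) : d = 0 := by
  have key : ∀ m : ℕ, ∀ p : Fin j, j ≤ (p : ℕ) + 1 + m → ∀ a, d (p, a) = 0 := by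
    intro m
    induction m with
    | zero =>
      intro p hp a
      have : p = ⟨j - 1, by omega⟩ := Fin.ext (by simp only [Fin.val_mk]; omega)
      rw [this]; exact hlast a
    | succ m ih =>
      intro p hp a
      by_cases hc : j ≤ (p : ℕ) + 1 + m
      · exact ih p hc a
      -- now j = p + 2 + m, so p + 1 < j
      have hp1 : (p : ℕ) + 1 < j := by omega
      set p' : Fin j := ⟨(p : ℕ) + 1, hp1⟩ with hp'
      -- for q with (q:ℕ) ≥ p+1, d (q, b) = 0
      have hup : ∀ q : Fin j, (p : ℕ) + 1 ≤ (q : ℕ) → ∀ b, d (q, b) = 0 := by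
        intro q hq b
        exact ih q (by omega) b
      -- row p' of the equation
      have hrw : ∀ a', (Gam H ((p : ℕ) + 2)).mulVec (fun b => d (p, b)) a' = 0 := by
        intro a'
        have h0 := hrow p' (by simp [hp']) a'
        rw [Matrix.sub_mulVec] at h0
        have h1 : ((θ • (1 : Matrix (Fin j × Fin s) (Fin j × Fin s) ℂ)).mulVec d) (p', a')
            = θ * d (p', a') := by
          simp [Matrix.smul_mulVec, Matrix.one_mulVec]
        rw [Pi.sub_apply, h1, hup p' (le_refl _) a'] at h0
        simp only [mul_zero, zero_sub, neg_eq_zero] at h0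
        -- h0 : H.mulVec d (p', a') = 0
        have hsplit : H.mulVec d (p', a')
            = ∑ q : Fin j, ∑ b : Fin s, H (p', a') (q, b) * d (q, b) := by
          simp [Matrix.mulVec, dotProduct, Fintype.sum_prod_type]
        rw [hsplit] at h0
        rw [Finset.sum_eq_single p] at h0
        · rw [← h0]
          rw [Gam, dif_pos ⟨by omega, by omega⟩]
          have e1 : (⟨(p : ℕ) + 2 - 1, by omega⟩ : Fin j) = p' := Fin.ext (by simp [hp'])
          have e2 : (⟨(p : ℕ) + 2 - 2, by omega⟩ : Fin j) = p := Fin.ext (by simp)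
          rw [e1, e2]
          simp [Matrix.mulVec, dotProduct, blk]
        · intro q _ hq
          by_cases hql : (q : ℕ) + 1 < (p' : ℕ)
          · apply Finset.sum_eq_zero; intro b _
            have := hH p' q (by simpa using hql)
            have hz : H (p', a') (q, b) = 0 := by
              have := congrFun (congrFun this a') b
              simpa [blk] using this
            rw [hz, zero_mul]
          · apply Finset.sum_eq_zero; intro b _
            have hge : (p : ℕ) + 1 ≤ (q : ℕ) := by
              have : (q : ℕ) ≠ (p : ℕ) := fun hc' => hq (Fin.ext hc')
              simp only [hp'] at hql
              omega
            rw [hup q hge b, mul_zero]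
        · intro h; exact absurd (Finset.mem_univ _) h
      have := mulVec_eq_zero_of_isUnit (hinv ((p : ℕ) + 2) (by omega) (by omega))
        (funext hrw)
      exact congrFun this a
  funext pa
  obtain ⟨p, a⟩ := pa
  exact key j p (by omega) a

end rec

section geo
variable {j s : ℕ}

noncomputable def Geo (θ : ℂ) (H : Matrix (Fin j × Fin s) (Fin j × Fin s) ℂ)
    (i : ℕ) : Matrix (Fin j × Fin s) (Fin j × Fin s) ℂ :=
  ∑ k ∈ Finset.range i, θ ^ (i - 1 - k) • H ^ k

variable (θ : ℂ) (H : Matrix (Fin j × Fin s) (Fin j × Fin s) ℂ)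

lemma geo_succ (i : ℕ) : Geo θ H (i + 1) = θ • Geo θ H i + H ^ i := by
  rw [Geo, Finset.sum_range_succ]
  congr 1
  · rw [Geo, Finset.smul_sum]
    apply Finset.sum_congr rfl
    intro k hk
    rw [Finset.mem_range] at hk
    rw [smul_smul, ← pow_succ']
    have he : i + 1 - 1 - k = i - 1 - k + 1 := by omega
    rw [he]
  · simp

lemma sub_mul_geo (i : ℕ) :
    (θ • 1 - H) * Geo θ H i = θ ^ i • 1 - H ^ i := by
  induction i with
  | zero => simp [Geo]
  | succ i ih =>
    have h1 : (θ • 1 - H) * H ^ i = θ • H ^ i - H ^ (i + 1) := by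
      rw [sub_mul, smul_mul_assoc, one_mul, ← pow_succ']
    rw [geo_succ, mul_add, mul_smul_comm, ih, h1, smul_sub, smul_smul, ← pow_succ']
    abel

noncomputable def Dmat (i : ℕ) : Matrix (Fin j × Fin s) (Fin j × Fin s) ℂ :=
  ∑ k ∈ Finset.range i, θ ^ (i - 1 - k) • Geo θ H k

lemma sub_mul_D (i : ℕ) :
    (θ • 1 - H) * Dmat θ H i = (i : ℂ) • (θ ^ (i - 1) • (1 : Matrix (Fin j × Fin s) (Fin j × Fin s) ℂ)) - Geo θ H i := by
  rw [Dmat, Matrix.mul_sum]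
  have key : ∀ k ∈ Finset.range i,
      (θ • 1 - H) * (θ ^ (i - 1 - k) • Geo θ H k)
        = θ ^ (i - 1) • (1 : Matrix (Fin j × Fin s) (Fin j × Fin s) ℂ)
          - θ ^ (i - 1 - k) • H ^ k := by
    intro k hk
    rw [Finset.mem_range] at hk
    rw [mul_smul_comm, sub_mul_geo, smul_sub, smul_smul, ← pow_add]
    congr 3
    omega
  rw [Finset.sum_congr rfl key, Finset.sum_sub_distrib, Finset.sum_const,
    Finset.card_range, ← Geo]
  congr 1
  simp [← Nat.cast_smul_eq_nsmul ℂ]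

lemma blk_sum {ι : Type*} (t : Finset ι)
    (f : ι → Matrix (Fin j × Fin s) (Fin j × Fin s) ℂ) (p q : Fin j) :
    blk (∑ i ∈ t, f i) p q = ∑ i ∈ t, blk (f i) p q := by
  ext a b; simp only [blk, Matrix.of_apply, Matrix.sum_apply]

lemma blk_smul (c : ℂ) (A : Matrix (Fin j × Fin s) (Fin j × Fin s) ℂ) (p q : Fin j) :
    blk (c • A) p q = c • blk A p q := by
  ext a b; simp [blk]

lemma bRow_mul_E (A : Matrix (Fin j × Fin s) (Fin j × Fin s) ℂ) (p i : Fin j) :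
    bRow (A * (blkE i : Matrix (Fin j × Fin s) (Fin s) ℂ)) p = blk A p i := by
  rw [bRow_mul]
  rw [Finset.sum_congr rfl (fun r _ => by rw [bRow_E])]
  simp

lemma evalS_eq_sum_range {P : Polynomial (Mat s)} {θ : ℂ} {N : ℕ}
    (hN : P.natDegree < N) :
    evalS P θ = ∑ i ∈ Finset.range N, θ ^ i • P.coeff i := by
  rw [evalS]
  apply Finset.sum_subset
  · intro x hx
    rw [Finset.mem_range] at *
    omega
  · intro x _ hx
    rw [Finset.mem_range, not_lt] at hx
    rw [Polynomial.coeff_eq_zero_of_natDegree_lt (by omega), smul_zero]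

end geo

/-- for a simple eigenvalue `θ` of a block upper Hessenberg `H` with
right/left eigenvectors `v, w`, the blocks satisfy `w₁* Λ(θ) = 0`, `Λ(θ) vⱼ = 0`
and `w* v = w₁* Λ'(θ) vⱼ`, where `Λ` is the block characteristic polynomial of `H`
w.r.t. `E₁` with leading coefficient `Γ₂⁻¹ ⋯ Γⱼ⁻¹`. -/
theorem eigenvector_blocks_of_char_poly {j s : ℕ} (hj : 0 < j)
    (H : Matrix (Fin j × Fin s) (Fin j × Fin s) ℂ) (hH : BUH H)
    (hinv : ∀ i : ℕ, 2 ≤ i → i ≤ j → IsUnit (Gam H i))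
    (Λ : Polynomial (Mat s)) (hdeg : Λ.natDegree = j)
    (hlead : Λ.leadingCoeff =
      ((List.range (j - 1)).map (fun m => (Gam H (m + 2))⁻¹)).prod)
    (hann : act Λ H (blkE (⟨0, hj⟩ : Fin j)) = 0)
    (θ : ℂ) (hsimple : (Matrix.charpoly H).rootMultiplicity θ = 1)
    (v w : Fin j × Fin s → ℂ) (hv : v ≠ 0) (hw : w ≠ 0)
    (hvr : H.mulVec v = θ • v)
    (hwl : Matrix.vecMul (star w) H = θ • star w) :
    Matrix.vecMul (star fun a : Fin s => w (⟨0, hj⟩, a)) (evalS Λ θ) = 0 ∧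
    (evalS Λ θ).mulVec (fun a : Fin s => v (⟨j - 1, by omega⟩, a)) = 0 ∧
    star w ⬝ᵥ v =
      (star fun a : Fin s => w (⟨0, hj⟩, a)) ⬝ᵥ
        (evalS (Polynomial.derivative Λ) θ).mulVec
          (fun a : Fin s => v (⟨j - 1, by omega⟩, a)) := by
  set e0 : Fin j := ⟨0, hj⟩ with he0
  set pl : Fin j := ⟨j - 1, by omega⟩ with hpl
  set E : Matrix (Fin j × Fin s) (Fin s) ℂ := blkE e0 with hE
  set vj : Fin s → ℂ := fun a => v (pl, a) with hvj
  set X : Matrix (Fin j × Fin s) (Fin s) ℂ :=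
    ∑ i ∈ Finset.range (j + 1), Geo θ H i * E * Λ.coeff i with hX
  set X' : Matrix (Fin j × Fin s) (Fin s) ℂ :=
    ∑ i ∈ Finset.range (j + 1), Dmat θ H i * E * Λ.coeff i with hX'
  -- key polynomial-evaluation identities
  have hEΛ : E * evalS Λ θ = (θ • 1 - H) * X := by
    have hact : ∑ i ∈ Finset.range (j + 1), H ^ i * E * Λ.coeff i = 0 := by
      rw [act, hdeg] at hann; exact hann
    rw [hX, Matrix.mul_sum]
    have hterm : ∀ i ∈ Finset.range (j + 1),
        (θ • 1 - H) * (Geo θ H i * E * Λ.coeff i)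
          = θ ^ i • (E * Λ.coeff i) - H ^ i * E * Λ.coeff i := by
      intro i _
      rw [← Matrix.mul_assoc, ← Matrix.mul_assoc, sub_mul_geo, Matrix.sub_mul,
        Matrix.sub_mul, Matrix.smul_mul, Matrix.one_mul, Matrix.smul_mul]
    rw [Finset.sum_congr rfl hterm, Finset.sum_sub_distrib, hact, sub_zero,
      evalS, hdeg, Matrix.mul_sum]
    exact Finset.sum_congr rfl fun i _ => Matrix.mul_smul _ _ _
  have hEΛ' : E * evalS (Polynomial.derivative Λ) θ = X + (θ • 1 - H) * X' := by
    have hcast : ∀ m : ℕ, ((m : ℕ) : Mat s) = (m : ℂ) • (1 : Mat s) := by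
      intro m
      rw [Nat.cast_smul_eq_nsmul, nsmul_eq_mul, mul_one]
    have hL : E * evalS (Polynomial.derivative Λ) θ
        = ∑ i ∈ Finset.range j, ((i : ℂ) + 1) • θ ^ i • (E * Λ.coeff (i + 1)) := by
      rw [evalS_eq_sum_range (show (Polynomial.derivative Λ).natDegree < j from
        lt_of_le_of_lt (Polynomial.natDegree_derivative_le Λ) (by omega)),
        Matrix.mul_sum]
      apply Finset.sum_congr rfl
      intro i _
      have hco : (Polynomial.derivative Λ).coeff i = ((i : ℂ) + 1) • Λ.coeff (i + 1) := by
        rw [Polynomial.coeff_derivative]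
        have h1 : ((i : ℕ) : Mat s) + 1 = (((i + 1 : ℕ) : ℕ) : Mat s) := by
          push_cast; ring
        rw [h1, hcast (i + 1), mul_smul_comm, mul_one]
        push_cast; ring_nf
      rw [hco, Matrix.mul_smul, Matrix.mul_smul, smul_comm]
    have hR : (θ • 1 - H) * X'
        = (∑ i ∈ Finset.range (j + 1), (i : ℂ) • θ ^ (i - 1) • (E * Λ.coeff i)) - X := by
      rw [hX', Matrix.mul_sum]
      have hterm : ∀ i ∈ Finset.range (j + 1),
          (θ • 1 - H) * (Dmat θ H i * E * Λ.coeff i)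
            = (i : ℂ) • θ ^ (i - 1) • (E * Λ.coeff i) - Geo θ H i * E * Λ.coeff i := by
        intro i _
        rw [← Matrix.mul_assoc, ← Matrix.mul_assoc, sub_mul_D, Matrix.sub_mul,
          Matrix.sub_mul, Matrix.smul_mul, Matrix.smul_mul, Matrix.smul_mul,
          Matrix.smul_mul, Matrix.one_mul]
      rw [Finset.sum_congr rfl hterm, Finset.sum_sub_distrib, hX]
    rw [hR, add_sub_cancel, hL]
    rw [Finset.sum_range_succ'
      (fun i => (i : ℂ) • θ ^ (i - 1) • (E * Λ.coeff i)) j]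
    simp only [Nat.cast_zero, zero_smul, add_zero, Nat.cast_add, Nat.cast_one,
      Nat.add_sub_cancel]
  -- last block row of X is the identity
  have hXrow : bRow X pl = 1 := by
    rw [hX, bRow_sum]
    have hterm : ∀ i ∈ Finset.range (j + 1), bRow (Geo θ H i * E * Λ.coeff i) pl
        = (∑ k ∈ Finset.range i, θ ^ (i - 1 - k) • blk (H ^ k) pl e0) * Λ.coeff i := by
      intro i _
      rw [bRow_mulRight, hE, bRow_mul_E, Geo, blk_sum,
        Finset.sum_congr rfl fun k _ => blk_smul _ _ _ _]
    have hzero : ∀ k : ℕ, k < j - 1 → blk (H ^ k) pl e0 = 0 := by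
      intro k hk
      exact blk_pow_eq_zero hH k pl e0 (by simp [hpl, he0]; omega)
    rw [Finset.sum_congr rfl hterm]
    rw [Finset.sum_eq_single j]
    · rw [Finset.sum_eq_single (j - 1)]
      · rw [show j - 1 - (j - 1) = 0 from by omega, pow_zero, one_smul]
        have hc : Λ.coeff j = Λ.leadingCoeff := by
          rw [Polynomial.leadingCoeff, hdeg]
        rw [hc, hlead]
        exact blk_pow_prod_inv hH hinv (j - 1) (by omega)
      · intro k hk hkj
        rw [Finset.mem_range] at hk
        rw [hzero k (by omega), smul_zero]
      · intro hnm
        exact absurd (Finset.mem_range.mpr (by omega)) hnm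
    · intro i hi hij
      rw [Finset.mem_range] at hi
      have : (∑ k ∈ Finset.range i, θ ^ (i - 1 - k) • blk (H ^ k) pl e0) = 0 := by
        apply Finset.sum_eq_zero
        intro k hk
        rw [Finset.mem_range] at hk
        rw [hzero k (by omega), smul_zero]
      rw [this, Matrix.zero_mul]
    · intro hnm
      exact absurd (Finset.mem_range.mpr (by omega)) hnm
  -- left eigvector facts
  have hwH : Matrix.vecMul (star w) (θ • 1 - H) = 0 := by
    have h1 : Matrix.vecMul (star w) (θ • (1 : Matrix (Fin j × Fin s) (Fin j × Fin s) ℂ))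
        = θ • star w := by
      ext b
      simp [Matrix.vecMul, dotProduct, Matrix.one_apply, mul_comm]
    rw [Matrix.vecMul_sub, hwl, h1, sub_self]
  have hwE : Matrix.vecMul (star w) E = (star fun a : Fin s => w (e0, a)) := by
    funext b
    rw [hE]
    simp only [Matrix.vecMul, dotProduct, blkE, Matrix.of_apply, Pi.star_apply]
    rw [Fintype.sum_prod_type]
    rw [Finset.sum_eq_single e0]
    · rw [Finset.sum_eq_single b]
      · simp
      · intro a _ hab; rw [if_neg (by tauto), mul_zero]
      · intro h; exact absurd (Finset.mem_univ _) h
    · intro p _ hp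
      apply Finset.sum_eq_zero; intro a _
      rw [if_neg (by tauto), mul_zero]
    · intro h; exact absurd (Finset.mem_univ _) h
  -- right eigvector fact
  have hvH : (θ • 1 - H).mulVec v = 0 := by
    rw [Matrix.sub_mulVec, Matrix.smul_mulVec, Matrix.one_mulVec, hvr, sub_self]
  -- X vj = v
  have hXv : X.mulVec vj = v := by
    have hd := backward_zero hH hinv θ (X.mulVec vj - v) hj ?_ ?_
    · have := sub_eq_zero.mp hd
      exact this
    · intro p hp a
      rw [Matrix.mulVec_sub]
      have h2 : (θ • 1 - H).mulVec ((X.mulVec vj)) (p, a)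
          = ((E * evalS Λ θ).mulVec vj) (p, a) := by
        rw [Matrix.mulVec_mulVec, ← hEΛ]
      rw [Pi.sub_apply, h2, hvH, Pi.zero_apply, sub_zero, mulVec_bRow, bRow_mulRight, bRow_E,
        if_neg (by intro hc; rw [hc] at hp; simp [he0] at hp), zero_mul,
        Matrix.zero_mulVec, Pi.zero_apply]
    · intro a
      rw [Pi.sub_apply]
      rw [mulVec_bRow, hXrow, Matrix.one_mulVec]
      exact sub_self _
  refine ⟨?_, ?_, ?_⟩
  · -- goal 1
    rw [← hwE, Matrix.vecMul_vecMul, hEΛ, ← Matrix.vecMul_vecMul, hwH,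
      Matrix.zero_vecMul]
  · -- goal 2
    have hz : (E * evalS Λ θ).mulVec vj = 0 := by
      rw [hEΛ, ← Matrix.mulVec_mulVec, hXv, hvH]
    funext a
    have := congrFun hz (e0, a)
    rw [mulVec_bRow, bRow_mulRight, bRow_E, if_pos rfl, one_mul] at this
    exact this
  · -- goal 3
    rw [← hwE]
    rw [← Matrix.dotProduct_mulVec]
    rw [Matrix.mulVec_mulVec, hEΛ', Matrix.add_mulVec, dotProduct_add]
    rw [hXv]
    rw [← Matrix.mulVec_mulVec, Matrix.dotProduct_mulVec, hwH,
      zero_dotProduct, add_zero]
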